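/- For every n ≥ 0, the map (T,λ) ↦ σ(T,λ) is a bijection from the set of all increasing trees with n branchings onto the set Comp_n of all set compositions of [n]. -/

import Mathlib

set_option linter.unreachableTactic false
set_option linter.unusedTactic false
set_option maxHeartbeats 1000000


open Finset

/-- Candidate set compositions: lists of finite sets of positive naturals. -/
abbrev SC : Type := List (Finset ℕ)

/-- The underlying (ground) set of a list of blocks. -/
def ground (L : SC) : Finset ℕ := L.foldr (· ∪ ·) ∅

/-- `L` is a set composition of `[n] = {1,…,n}`. -/
def IsSetComp (n : ℕ) (L : SC) : Prop :=
  (∀ B ∈ L, B.Nonempty) ∧ L.Pairwise Disjoint ∧ ground L = Finset.Icc 1 n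

/-- The degree of a set composition (largest element of its ground set). -/
def maxG (L : SC) : ℕ := (ground L).sup id

/-- The 1-based rank of `x` inside the finite set `A` (the position of `x` in the
increasing enumeration of `A`, when `x ∈ A`); this is the order preserving
relabelling `A → [|A|]`. -/
def rankIn (A : Finset ℕ) (x : ℕ) : ℕ := (A.filter (· ≤ x)).card

/-- `P|_A` : intersect the blocks with `A`, delete the empty intersections, and
relabel along the order preserving bijection `A → [|A|]`. -/
def restrictSC (A : Finset ℕ) (L : SC) : SC :=
  (L.map fun B => (B ∩ A).image (rankIn A)).filter fun B => decide B.Nonempty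

/-- Shift all entries of all blocks by `p`. -/
def shiftSC (p : ℕ) (L : SC) : SC := L.map (Finset.image (· + p))

/-- The restricted product `∗̄` on set compositions:
`P ∗̄ Q = (P₁,…,P_k, p+Q₁,…,p+Q_l)` for `P ∈ Comp_p`. -/
def barMul (P Q : SC) : SC := P ++ shiftSC (maxG P) Q

/-- The order-preserving relabelling map `S → T` (`is_{S,T}`), for finite sets
of equal cardinality. -/
def relabelFun (S T : Finset ℕ) (x : ℕ) : ℕ := (T.sort (· ≤ ·)).getD (rankIn S x - 1) 0

/-- Relabel a set composition of `S` along the order-preserving bijection `S → T`. -/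
def relabelSC (S T : Finset ℕ) (L : SC) : SC := L.map (Finset.image (relabelFun S T))

variable (R : Type) [CommRing R]

/-- The free module with basis indexed by lists of blocks; the twisted descent
algebra `T_•` is its submodule spanned by the set compositions. -/
abbrev FM := SC →₀ R

/-- `T_•` as a submodule: the span of the set compositions. -/
noncomputable def Tspan : Submodule R (FM R) :=
  Submodule.span R {f : FM R | ∃ n P, IsSetComp n P ∧ f = Finsupp.single P 1}

/-- The restricted product `∗̄` as a bilinear map. -/
noncomputable def barL : FM R →ₗ[R] FM R →ₗ[R] FM R :=
  Finsupp.lift _ R SC fun P => Finsupp.lift _ R SC fun Q => Finsupp.single (barMul P Q) 1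

/-- The symmetrized product `∗̂` on basis elements:
`P ∗̂ Q = Σ is_{[p],A}(P) ∗ is_{[q],B}(Q)` over all `A ⊔ B = [p+q]`, `|A| = p`. -/
noncomputable def hatB (P Q : SC) : FM R :=
  ∑ A ∈ (Finset.Icc 1 (maxG P + maxG Q)).powerset.filter (fun A => A.card = maxG P),
    Finsupp.single
      (relabelSC (Finset.Icc 1 (maxG P)) A P ++
        relabelSC (Finset.Icc 1 (maxG Q)) ((Finset.Icc 1 (maxG P + maxG Q)) \ A) Q) 1

/-- The symmetrized product `∗̂` as a bilinear map. -/
noncomputable def hatL : FM R →ₗ[R] FM R →ₗ[R] FM R :=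
  Finsupp.lift _ R SC fun P => Finsupp.lift _ R SC fun Q => hatB R P Q

/-- `T_• ⊗ T_•`, realized as the free module on pairs of basis elements. -/
abbrev FM2 := (SC × SC) →₀ R

/-- `T_• ⊗ T_• ⊗ T_•`, realized as the free module on triples of basis elements. -/
abbrev FM3 := (SC × SC × SC) →₀ R

/-- The restricted coproduct `δ̄ (P) = Σ_{p=0}^n P|_{[p]} ⊗ P|_{{p+1,…,n}}`. -/
noncomputable def dBarL : FM R →ₗ[R] FM2 R :=
  Finsupp.lift _ R SC fun P =>
    ∑ p ∈ Finset.range (maxG P + 1),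
      Finsupp.single
        (restrictSC (Finset.Icc 1 p) P, restrictSC (Finset.Icc (p+1) (maxG P)) P) 1

/-- The cosymmetrized coproduct `δ̂ (P) = Σ_{A ⊔ B = [n]} P|_A ⊗ P|_B`. -/
noncomputable def dHatL : FM R →ₗ[R] FM2 R :=
  Finsupp.lift _ R SC fun P =>
    ∑ A ∈ (Finset.Icc 1 (maxG P)).powerset,
      Finsupp.single (restrictSC A P, restrictSC ((Finset.Icc 1 (maxG P)) \ A) P) 1

/-- Apply a coproduct to the first tensor factor:  `d ⊗ id : T⊗T → T⊗T⊗T`. -/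
noncomputable def applyFst (d : FM R →ₗ[R] FM2 R) : FM2 R →ₗ[R] FM3 R :=
  Finsupp.lift _ R (SC × SC) fun PQ =>
    Finsupp.mapDomain (fun RS : SC × SC => (RS.1, RS.2, PQ.2)) (d (Finsupp.single PQ.1 1))

/-- Apply a coproduct to the second tensor factor:  `id ⊗ d : T⊗T → T⊗T⊗T`. -/
noncomputable def applySnd (d : FM R →ₗ[R] FM2 R) : FM2 R →ₗ[R] FM3 R :=
  Finsupp.lift _ R (SC × SC) fun PQ =>
    Finsupp.mapDomain (fun RS : SC × SC => (PQ.1, RS.1, RS.2)) (d (Finsupp.single PQ.2 1))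

/-- `ε ⊗ id : T⊗T → T`, where `ε` is the projection onto `T_0 ≅ R`
(the coefficient of the empty set composition). -/
noncomputable def epsFst : FM2 R →ₗ[R] FM R :=
  Finsupp.lift _ R (SC × SC) fun PQ =>
    if PQ.1 = ([] : SC) then Finsupp.single PQ.2 1 else 0

/-- `id ⊗ ε : T⊗T → T`. -/
noncomputable def epsSnd : FM2 R →ₗ[R] FM R :=
  Finsupp.lift _ R (SC × SC) fun PQ =>
    if PQ.2 = ([] : SC) then Finsupp.single PQ.1 1 else 0

/-- The twist map `x ⊗ y ↦ y ⊗ x` on `T_• ⊗ T_•`. -/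
noncomputable def twistL : FM2 R →ₗ[R] FM2 R :=
  Finsupp.lift _ R (SC × SC) fun PQ => Finsupp.single (PQ.2, PQ.1) 1

/-- The counit: projection onto the degree-0 component `T_0 ≅ R`. -/
noncomputable def counitL : FM R →ₗ[R] R :=
  Finsupp.lift _ R SC fun P => if P = ([] : SC) then 1 else 0

inductive PTree : Type
  | eps : PTree
  | wedge : PTree → PTree → List PTree → PTree

inductive LTree : Type
  | eps : LTree
  | wedge : ℕ → LTree → LTree → List LTree → LTree

namespace LTree

def levels : LTree → List ℕ
  | .eps => []
  | .wedge r t0 t1 rest =>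
      r :: (t0.levels ++ t1.levels ++ (rest.attach.map (fun x => x.1.levels)).flatten)
decreasing_by all_goals (first
  | (have h := List.sizeOf_lt_of_mem x.2; simp_wf; simp at h; omega)
  | (have h := List.sizeOf_lt_of_mem x.2; simp_wf; omega)
  | (simp_wf; omega))

def numLevels (t : LTree) : ℕ := t.levels.foldr max 0

def brLevels : LTree → List ℕ
  | .eps => []
  | .wedge r t0 t1 rest =>
      t0.brLevels ++ r :: t1.brLevels ++
        (rest.attach.map (fun x => r :: x.1.brLevels)).flatten
decreasing_by all_goals (first
  | (have h := List.sizeOf_lt_of_mem x.2; simp_wf; simp at h; omega)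
  | (have h := List.sizeOf_lt_of_mem x.2; simp_wf; omega)
  | (simp_wf; omega))

def addLevels (c : ℕ) : LTree → LTree
  | .eps => .eps
  | .wedge r t0 t1 rest =>
      .wedge (r + c) (t0.addLevels c) (t1.addLevels c)
        (rest.attach.map (fun x => x.1.addLevels c))
decreasing_by all_goals (first
  | (have h := List.sizeOf_lt_of_mem x.2; simp_wf; simp at h; omega)
  | (have h := List.sizeOf_lt_of_mem x.2; simp_wf; omega)
  | (simp_wf; omega))

end LTree

def Fgt : LTree → PTree
  | .eps => .eps
  | .wedge _ t0 t1 rest => .wedge (Fgt t0) (Fgt t1) (rest.attach.map (fun x => Fgt x.1))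
decreasing_by all_goals (first
  | (have h := List.sizeOf_lt_of_mem x.2; simp_wf; simp at h; omega)
  | (have h := List.sizeOf_lt_of_mem x.2; simp_wf; omega)
  | (simp_wf; omega))

def graftP (s : PTree) : PTree → PTree
  | .eps => s
  | .wedge t0 t1 rest => .wedge (graftP s t0) t1 rest

def Inc : PTree → LTree
  | .eps => .eps
  | .wedge t0 t1 rest =>
      let incs := Inc t0 :: Inc t1 :: rest.attach.map (fun x => Inc x.1)
      let offs := (incs.map LTree.numLevels).scanl (· + ·) 1
      match (incs.zip offs).map (fun p => p.1.addLevels p.2) with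
      | s0 :: s1 :: srest => .wedge 1 s0 s1 srest
      | _ => .eps
decreasing_by all_goals (first
  | (have h := List.sizeOf_lt_of_mem x.2; simp_wf; simp at h; omega)
  | (have h := List.sizeOf_lt_of_mem x.2; simp_wf; omega)
  | (simp_wf; omega))

def brPaths : LTree → List (List ℕ)
  | .eps => []
  | .wedge _ t0 t1 rest =>
      (brPaths t0).map (fun p => 0 :: p) ++
        ((((t1 :: rest).attach.map (fun x => brPaths x.1)).zipIdx.map
          (fun is => ([] : List ℕ) :: is.1.map (fun p => (is.2 + 1) :: p))).flatten)
decreasing_by all_goals (first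
  | (have h := List.sizeOf_lt_of_mem x.2; simp_wf; simp at h; omega)
  | (have h := List.sizeOf_lt_of_mem x.2; simp_wf; omega)
  | (simp_wf; omega))

def sigmaOf (t : LTree) : List (Finset ℕ) :=
  let w := t.brLevels
  (List.range (w.foldr max 0)).map fun i =>
    ((List.range w.length).filter (fun j => w.getD j 0 = i + 1)).toFinset.image (· + 1)

/-- The level function is strictly increasing from the root down, all levels
being `> lo`: this expresses that levels strictly increase along every path
joining a leaf to the root. -/
inductive IncrFrom : ℕ → LTree → Prop
  | eps (lo : ℕ) : IncrFrom lo .eps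
  | wedge (lo r : ℕ) (t0 t1 : LTree) (rest : List LTree) :
      lo < r → IncrFrom r t0 → IncrFrom r t1 → (∀ t ∈ rest, IncrFrom r t) →
      IncrFrom lo (.wedge r t0 t1 rest)

/-- An increasing tree: the level function is strictly increasing along every
path from a leaf to the root, and its set of values is `[k]` for some `k ≥ 0`
(it is standard). -/
def IsIncTree (t : LTree) : Prop :=
  IncrFrom 0 t ∧ t.levels.toFinset = Finset.Icc 1 t.numLevels

/-- Two vertices, recorded by their root-to-vertex paths of child indices, lie
on a common path connecting a leaf with the root iff one is an ancestor of the
other, i.e. iff one path is a prefix of the other. -/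
def OnCommonPath (p q : List ℕ) : Prop := p <+: q ∨ q <+: p

namespace SigmaAux

open List

/-- intercalate with a single separator, cons form. -/
lemma intercalate_cons (r : ℕ) (a : List ℕ) (l : List (List ℕ)) :
    [r].intercalate (a :: l) = a ++ (l.map (r :: ·)).flatten := by
  induction l generalizing a with
  | nil => simp [List.intercalate]
  | cons b t ih =>
      rw [show ([r].intercalate (a :: b :: t)) = a ++ r :: [r].intercalate (b :: t) by
        simp [List.intercalate, List.intersperse]]
      rw [ih b]
      simp

lemma mem_intercalate {y : ℕ} {r : ℕ} {l : List ℕ} {ls : List (List ℕ)}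
    (hl : l ∈ ls) (hy : y ∈ l) : y ∈ [r].intercalate ls := by
  cases ls with
  | nil => cases hl
  | cons a t =>
      rw [intercalate_cons]
      rcases List.mem_cons.mp hl with rfl | hl
      · exact List.mem_append_left _ hy
      · refine List.mem_append_right _ ?_
        simp only [List.mem_flatten, List.mem_map]
        exact ⟨r :: l, ⟨l, hl, rfl⟩, List.mem_cons_of_mem _ hy⟩

lemma length_le_intercalate {r : ℕ} {l : List ℕ} {ls : List (List ℕ)} (hl : l ∈ ls) :
    l.length ≤ ([r].intercalate ls).length := by
  cases ls with
  | nil => cases hl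
  | cons a t =>
      rw [intercalate_cons]
      rcases List.mem_cons.mp hl with rfl | hl
      · simp
      · have : (r :: l) ∈ t.map (r :: ·) := List.mem_map_of_mem hl
        have h2 := List.le_sum_of_mem (List.mem_map_of_mem (f := List.length) this)
        simp only [List.length_append, List.length_flatten]
        simp only [List.length_cons] at h2
        omega

lemma length_lt_intercalate {r : ℕ} {l : List ℕ} {a b : List ℕ} {t : List (List ℕ)}
    (hl : l ∈ a :: b :: t) : l.length < ([r].intercalate (a :: b :: t)).length := by
  rcases List.mem_cons.mp hl with rfl | hl
  · rw [intercalate_cons]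
    have : (r :: b) ∈ (b :: t).map (r :: ·) := List.mem_map_of_mem (by simp)
    have h2 := List.le_sum_of_mem (List.mem_map_of_mem (f := List.length) this)
    simp only [List.length_append, List.length_flatten, List.length_cons] at *
    omega
  · have h1 := length_le_intercalate (r := r) (ls := b :: t) hl
    rw [intercalate_cons, List.map_cons, List.flatten_cons]
    rw [intercalate_cons] at h1
    simp only [List.length_append, List.length_cons] at *
    omega

/-- members of splitOn pieces don't contain the separator. -/
lemma not_mem_splitOn (x : ℕ) (w : List ℕ) : ∀ l ∈ w.splitOn x, x ∉ l := by
  induction w with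
  | nil => intro l hl; rw [List.splitOn, List.splitOnP_nil] at hl; simp at hl; subst hl; simp
  | cons a w ih =>
      intro l hl
      rw [List.splitOn, List.splitOnP_cons] at hl
      by_cases h : a = x
      · rw [if_pos (by simp [h])] at hl
        rcases List.mem_cons.mp hl with rfl | hl
        · simp
        · exact ih l hl
      · rw [if_neg (by simp [h])] at hl
        rcases hs : w.splitOnP (· == x) with _ | ⟨p, ps⟩
        · exact absurd hs (List.splitOnP_ne_nil _ w)
        rw [hs] at hl
        simp only [List.modifyHead] at hl
        rcases List.mem_cons.mp hl with rfl | hl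
        · intro hmem
          rcases List.mem_cons.mp hmem with rfl | hmem
          · exact h rfl
          · exact ih p (by simp only [List.splitOn]; rw [hs]; exact List.mem_cons_self) hmem
        · exact ih l (by simp only [List.splitOn]; rw [hs]; exact List.mem_cons_of_mem _ hl)

lemma min_spec {w : List ℕ} (hw : w ≠ []) :
    w.min?.getD 0 ∈ w ∧ ∀ x ∈ w, w.min?.getD 0 ≤ x := by
  rcases h : w.min? with _ | a
  · rw [List.min?_eq_none_iff] at h; exact absurd h hw
  · have := List.min?_eq_some_iff.mp h
    simpa [h] using this

/-- first occurrence decomposition -/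
lemma first_occ {x : ℕ} {w : List ℕ} (h : x ∈ w) : ∃ s t, w = s ++ x :: t ∧ x ∉ s := by
  induction w with
  | nil => cases h
  | cons a w ih =>
      by_cases hax : a = x
      · exact ⟨[], w, by simp [hax], by simp⟩
      · rcases List.mem_cons.mp h with rfl | h
        · exact absurd rfl hax
        · rcases ih h with ⟨s, t, rfl, hs⟩
          refine ⟨a :: s, t, by simp, ?_⟩
          simp only [List.mem_cons]
          rintro (rfl | h')
          · exact hax rfl
          · exact hs h'

lemma splitOn_two {x : ℕ} {w : List ℕ} (h : x ∈ w) :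
    ∃ s0 s1 rest, w.splitOn x = s0 :: s1 :: rest := by
  rcases first_occ h with ⟨s, t, rfl, hs⟩
  have h1 : (s ++ x :: t).splitOnP (· == x) = s :: t.splitOnP (· == x) :=
    List.splitOnP_first (p := (· == x)) (xs := s) (by intro y hy; simp; rintro rfl; exact hs hy) x (by simp) t
  rcases ht : t.splitOnP (· == x) with _ | ⟨p, ps⟩
  · exact absurd ht (List.splitOnP_ne_nil _ t)
  · exact ⟨s, p, ps, by simp only [List.splitOn]; rw [h1, ht]⟩

lemma length_lt_splitOn {x : ℕ} {w l : List ℕ} (hx : x ∈ w) (hl : l ∈ w.splitOn x) :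
    l.length < w.length := by
  rcases splitOn_two hx with ⟨s0, s1, rest, hs⟩
  rw [hs] at hl
  have := length_lt_intercalate (r := x) hl
  rwa [← hs, List.intercalate_splitOn] at this

end SigmaAux
namespace SigmaAux

def treeOfWord (w : List ℕ) : LTree :=
  if hw : w = [] then .eps else
    match hs : w.splitOn (w.min?.getD 0) with
    | s0 :: s1 :: rest =>
        .wedge (w.min?.getD 0) (treeOfWord s0) (treeOfWord s1)
          (rest.attach.map fun x => treeOfWord x.1)
    | _ => .eps
termination_by w.length
decreasing_by
  · exact length_lt_splitOn (min_spec hw).1 (by rw [hs]; exact List.mem_cons_self)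
  · exact length_lt_splitOn (min_spec hw).1
      (by rw [hs]; exact List.mem_cons_of_mem _ (List.mem_cons_self))
  · exact length_lt_splitOn (min_spec hw).1
      (by rw [hs]; exact List.mem_cons_of_mem _ (List.mem_cons_of_mem _ x.2))


end SigmaAux
namespace SigmaAux

lemma attach_map {α β : Type*} (l : List α) (f : α → β) :
    (l.attach.map fun x => f x.1) = l.map f := by
  simp

lemma attach_map_cons_br (r : ℕ) (l : List LTree) :
    (l.attach.map fun x => r :: x.1.brLevels) = l.map (fun t => r :: t.brLevels) :=
  attach_map l (fun t => r :: t.brLevels)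

lemma mem_of_mem_splitOn {x r : ℕ} {l w : List ℕ} (hl : l ∈ w.splitOn r) (hx : x ∈ l) :
    x ∈ w := by
  have := mem_intercalate (r := r) hl hx
  rwa [List.intercalate_splitOn] at this

lemma brLevels_treeOfWord (w : List ℕ) : (treeOfWord w).brLevels = w := by
  induction w using treeOfWord.induct with
  | case1 =>
      rw [treeOfWord]
      simp [LTree.brLevels]
  | case2 w hw s0 s1 rest hs ih0 ih1 ihrest =>
      rw [treeOfWord, dif_neg hw]
      rw [show (match hs' : w.splitOn (w.min?.getD 0) with
        | s0 :: s1 :: rest =>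
            LTree.wedge (w.min?.getD 0) (treeOfWord s0) (treeOfWord s1)
              (rest.attach.map fun x => treeOfWord x.1)
        | _ => LTree.eps) = LTree.wedge (w.min?.getD 0) (treeOfWord s0) (treeOfWord s1)
              (rest.attach.map fun x => treeOfWord x.1) from by rw [hs]]
      rw [LTree.brLevels, attach_map, attach_map_cons_br, List.map_map]
      rw [List.map_congr_left (l := rest)
        (f := (fun t : LTree => (w.min?.getD 0) :: t.brLevels) ∘ treeOfWord)
        (g := fun s => (w.min?.getD 0) :: s)
        (fun s hs' => by simp only [Function.comp_apply, ihrest ⟨s, hs'⟩])]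
      rw [ih0, ih1]
      conv_rhs => rw [← List.intercalate_splitOn (w.min?.getD 0) (xs := w), hs, intercalate_cons]
      simp
  | case3 w hw himp =>
      rcases splitOn_two (min_spec hw).1 with ⟨a, b, c, h⟩
      exact absurd h (by intro h; exact himp _ _ _ h)

end SigmaAux
namespace SigmaAux

lemma incrFrom_treeOfWord (w : List ℕ) : ∀ lo, (∀ x ∈ w, lo < x) → IncrFrom lo (treeOfWord w) := by
  induction w using treeOfWord.induct with
  | case1 => intro lo _; rw [treeOfWord]; exact IncrFrom.eps lo
  | case2 w hw s0 s1 rest hs ih0 ih1 ihrest =>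
      intro lo hlo
      rw [treeOfWord, dif_neg hw]
      rw [show (match hs' : w.splitOn (w.min?.getD 0) with
        | s0 :: s1 :: rest =>
            LTree.wedge (w.min?.getD 0) (treeOfWord s0) (treeOfWord s1)
              (rest.attach.map fun x => treeOfWord x.1)
        | _ => LTree.eps) = LTree.wedge (w.min?.getD 0) (treeOfWord s0) (treeOfWord s1)
              (rest.attach.map fun x => treeOfWord x.1) from by rw [hs]]
      have hmem : ∀ l ∈ s0 :: s1 :: rest, ∀ x ∈ l, w.min?.getD 0 < x := by
        intro l hl x hx
        have h1 : x ∈ w := mem_of_mem_splitOn (hs ▸ hl) hx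
        have h2 : x ≠ w.min?.getD 0 := fun h => not_mem_splitOn _ w l (hs ▸ hl) (h ▸ hx)
        have := (min_spec hw).2 x h1
        omega
      refine IncrFrom.wedge _ _ _ _ _ (hlo _ (min_spec hw).1) ?_ ?_ ?_
      · exact ih0 _ (hmem s0 (by simp))
      · exact ih1 _ (hmem s1 (by simp))
      · intro t ht
        simp only [List.mem_map, List.mem_attach, true_and] at ht
        obtain ⟨x, rfl⟩ := ht
        exact ihrest x _ (hmem x.1 (by simp [x.2]))
  | case3 w hw himp =>
      intro lo _
      exfalso
      rcases splitOn_two (min_spec hw).1 with ⟨a, b, c, h⟩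
      exact himp _ _ _ h

lemma brLevels_gt {lo : ℕ} {t : LTree} (h : IncrFrom lo t) : ∀ x ∈ t.brLevels, lo < x := by
  induction h with
  | eps lo => intro x hx; rw [LTree.brLevels] at hx; cases hx
  | wedge lo r t0 t1 rest hlo h0 h1 hrest ih0 ih1 ihrest =>
      intro x hx
      rw [LTree.brLevels, attach_map_cons_br] at hx
      rcases List.mem_append.mp hx with hx | hx
      · rcases List.mem_append.mp hx with hx | hx
        · exact lt_trans hlo (ih0 x hx)
        rcases List.mem_cons.mp hx with rfl | hx
        · exact hlo
        · exact lt_trans hlo (ih1 x hx)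
      obtain ⟨l, hl, hx⟩ := List.mem_flatten.mp hx
      obtain ⟨t, ht, rfl⟩ := List.mem_map.mp hl
      rcases List.mem_cons.mp hx with rfl | hx
      · exact hlo
      · exact lt_trans hlo (ihrest t ht x hx)

lemma treeOfWord_brLevels {lo : ℕ} {t : LTree} (h : IncrFrom lo t) :
    treeOfWord t.brLevels = t := by
  induction h with
  | eps lo => rw [LTree.brLevels, treeOfWord, dif_pos rfl]
  | wedge lo r t0 t1 rest hlo h0 h1 hrest ih0 ih1 ihrest =>
      have hbr : (LTree.wedge r t0 t1 rest).brLevels =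
          [r].intercalate (t0.brLevels :: t1.brLevels :: rest.map LTree.brLevels) := by
        rw [LTree.brLevels, attach_map_cons_br, intercalate_cons]
        simp [List.map_map, Function.comp_def]
      set w := (LTree.wedge r t0 t1 rest).brLevels with hw
      have hrw : r ∈ w := by
        rw [hbr, intercalate_cons]
        refine List.mem_append_right _ ?_
        simp only [List.mem_flatten, List.mem_map]
        exact ⟨r :: t1.brLevels, ⟨t1.brLevels, by simp, rfl⟩, by simp⟩
      have hwne : w ≠ [] := List.ne_nil_of_mem hrw
      have hgt : ∀ l ∈ t0.brLevels :: t1.brLevels :: rest.map LTree.brLevels, ∀ x ∈ l, r < x := by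
        intro l hl x hx
        rcases List.mem_cons.mp hl with rfl | hl
        · exact brLevels_gt h0 x hx
        rcases List.mem_cons.mp hl with rfl | hl
        · exact brLevels_gt h1 x hx
        · obtain ⟨t, ht, rfl⟩ := List.mem_map.mp hl
          exact brLevels_gt (hrest t ht) x hx
      have hge : ∀ x ∈ w, r ≤ x := by
        intro x hx
        rw [hbr, intercalate_cons] at hx
        rcases List.mem_append.mp hx with hx | hx
        · exact le_of_lt (hgt _ (by simp) x hx)
        · simp only [List.mem_flatten, List.mem_map] at hx
          obtain ⟨l, ⟨p, hp, rfl⟩, hx⟩ := hx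
          rcases List.mem_cons.mp hx with rfl | hx
          · exact le_refl x
          · exact le_of_lt (hgt p (List.mem_cons_of_mem _ hp) x hx)
      have hmin : w.min?.getD 0 = r :=
        le_antisymm ((min_spec hwne).2 r hrw) (hge _ (min_spec hwne).1)
      have hsplit : w.splitOn r = t0.brLevels :: t1.brLevels :: rest.map LTree.brLevels := by
        rw [hbr]
        exact List.splitOn_intercalate r
          (fun l hl hrl => lt_irrefl r (hgt l hl r hrl)) (by simp)
      have hsplit' : w.splitOn (w.min?.getD 0) =
          t0.brLevels :: t1.brLevels :: rest.map LTree.brLevels := by rw [hmin, hsplit]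
      rw [treeOfWord, dif_neg hwne]
      rw [show (match hs' : w.splitOn (w.min?.getD 0) with
        | s0 :: s1 :: rest =>
            LTree.wedge (w.min?.getD 0) (treeOfWord s0) (treeOfWord s1)
              (rest.attach.map fun x => treeOfWord x.1)
        | _ => LTree.eps) = LTree.wedge (w.min?.getD 0) (treeOfWord t0.brLevels)
              (treeOfWord t1.brLevels)
              ((rest.map LTree.brLevels).attach.map fun x => treeOfWord x.1) from by rw [hsplit']]
      rw [hmin, ih0, ih1, attach_map, List.map_map]
      rw [List.map_congr_left (l := rest) (f := treeOfWord ∘ LTree.brLevels) (g := id)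
        (fun t ht => by simp only [Function.comp_apply, id_eq, ihrest t ht])]
      rw [List.map_id]

end SigmaAux
namespace SigmaAux

lemma foldr_max_eq_sup (l : List ℕ) : l.foldr max 0 = l.toFinset.sup id := by
  induction l with
  | nil => simp
  | cons a l ih => simp [List.foldr_cons, ih]

lemma sup_Icc (n : ℕ) : (Finset.Icc 1 n).sup id = n := by
  rcases Nat.eq_zero_or_pos n with rfl | hn
  · simp
  · refine le_antisymm (Finset.sup_le fun x hx => (Finset.mem_Icc.mp hx).2) ?_
    exact Finset.le_sup (f := id) (Finset.mem_Icc.mpr ⟨hn, le_refl n⟩)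

lemma levels_toFinset {lo : ℕ} {t : LTree} (h : IncrFrom lo t) :
    t.levels.toFinset = t.brLevels.toFinset := by
  induction h with
  | eps lo => rw [LTree.levels, LTree.brLevels]
  | wedge lo r t0 t1 rest hlo h0 h1 hrest ih0 ih1 ihrest =>
      ext a
      rw [LTree.levels, LTree.brLevels, attach_map, attach_map_cons_br]
      have e0 : a ∈ t0.levels ↔ a ∈ t0.brLevels := by
        rw [← List.mem_toFinset, ih0, List.mem_toFinset]
      have e1 : a ∈ t1.levels ↔ a ∈ t1.brLevels := by
        rw [← List.mem_toFinset, ih1, List.mem_toFinset]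
      have er : ∀ t' ∈ rest, (a ∈ t'.levels ↔ a ∈ t'.brLevels) := fun t' ht' => by
        rw [← List.mem_toFinset, ihrest t' ht', List.mem_toFinset]
      by_cases har : a = r
      · subst har
        simp
      · simp only [List.mem_toFinset, List.mem_cons, List.mem_append, List.mem_flatten,
          List.mem_map, har, false_or]
        constructor
        · rintro ((hx | hx) | ⟨l, ⟨t', ht', rfl⟩, hx⟩)
          · exact Or.inl (Or.inl (e0.mp hx))
          · exact Or.inl (Or.inr (e1.mp hx))
          · exact Or.inr ⟨r :: t'.brLevels, ⟨t', ht', rfl⟩,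
              List.mem_cons_of_mem _ ((er t' ht').mp hx)⟩
        · rintro ((hx | hx) | ⟨l, ⟨t', ht', rfl⟩, hx⟩)
          · exact Or.inl (Or.inl (e0.mpr hx))
          · exact Or.inl (Or.inr (e1.mpr hx))
          · rcases List.mem_cons.mp hx with rfl | hx
            · exact absurd rfl har
            · exact Or.inr ⟨t'.levels, ⟨t', ht', rfl⟩, (er t' ht').mpr hx⟩

lemma numLevels_eq {lo : ℕ} {t : LTree} (h : IncrFrom lo t) :
    t.numLevels = t.brLevels.foldr max 0 := by
  rw [LTree.numLevels, foldr_max_eq_sup, foldr_max_eq_sup, levels_toFinset h]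

end SigmaAux
namespace SigmaAux

def blockOf (w : List ℕ) (i : ℕ) : Finset ℕ :=
  ((List.range w.length).filter (fun j => w.getD j 0 = i + 1)).toFinset.image (· + 1)

def compOfWord (w : List ℕ) : SC := (List.range (w.foldr max 0)).map (blockOf w)

lemma sigmaOf_eq_comp (t : LTree) : sigmaOf t = compOfWord t.brLevels := rfl

def WordOK (w : List ℕ) : Prop := w.toFinset = Finset.Icc 1 (w.foldr max 0)

def wordOfComp (L : SC) : List ℕ :=
  (List.range (maxG L)).map fun j => (L.findIdx fun B => decide ((j + 1) ∈ B)) + 1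

lemma mem_ground {x : ℕ} {L : SC} : x ∈ ground L ↔ ∃ B ∈ L, x ∈ B := by
  induction L with
  | nil => simp [ground]
  | cons B L ih =>
      rw [show ground (B :: L) = B ∪ ground L from rfl]
      simp [ih]

lemma mem_blockOf {w : List ℕ} {i x : ℕ} :
    x ∈ blockOf w i ↔ ∃ j, j < w.length ∧ w.getD j 0 = i + 1 ∧ x = j + 1 := by
  simp only [blockOf, Finset.mem_image, List.mem_toFinset, List.mem_filter, List.mem_range,
    decide_eq_true_eq]
  constructor
  · rintro ⟨j, ⟨hj, he⟩, rfl⟩; exact ⟨j, hj, he, rfl⟩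
  · rintro ⟨j, hj, he, rfl⟩; exact ⟨j, ⟨hj, he⟩, rfl⟩

lemma findIdx_eq_of {α : Type*} (p : α → Bool) (l : List α) (i : ℕ) (hi : i < l.length)
    (hp : p l[i]) (hmin : ∀ j (hj : j < i), ¬ p (l[j]'(lt_trans hj hi)) = true) :
    l.findIdx p = i := by
  have h1 : l.findIdx p < l.length :=
    List.findIdx_lt_length_of_exists ⟨l[i], List.getElem_mem hi, hp⟩
  rcases lt_trichotomy (l.findIdx p) i with h | h | h
  · exact absurd (List.findIdx_getElem (w := h1)) (hmin _ h)
  · exact h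
  · have h2 := List.not_of_lt_findIdx h
    rw [hp] at h2
    cases h2

lemma getD_eq {w : List ℕ} {j : ℕ} (hj : j < w.length) : w.getD j 0 = w[j] :=
  List.getD_eq_getElem w 0 hj

lemma isSetComp_compOfWord {w : List ℕ} (h : WordOK w) :
    IsSetComp w.length (compOfWord w) := by
  set k := w.foldr max 0 with hk
  refine ⟨?_, ?_, ?_⟩
  · intro B hB
    obtain ⟨i, hi, rfl⟩ := List.mem_map.mp hB
    rw [List.mem_range] at hi
    have : i + 1 ∈ w.toFinset := by
      rw [h]; exact Finset.mem_Icc.mpr ⟨by omega, by omega⟩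
    obtain ⟨j, hj, hje⟩ := List.mem_iff_getElem.mp (List.mem_toFinset.mp this)
    exact ⟨j + 1, mem_blockOf.mpr ⟨j, hj, by rw [getD_eq hj, hje], rfl⟩⟩
  · simp only [compOfWord, List.pairwise_map]
    refine (List.pairwise_lt_range (n := k)).imp ?_
    intro i i' hii'
    rw [Finset.disjoint_left]
    intro x hx hx'
    obtain ⟨j, hj, he, rfl⟩ := mem_blockOf.mp hx
    obtain ⟨j', hj', he', hee⟩ := mem_blockOf.mp hx'
    have : j = j' := by omega
    subst this
    omega
  · ext x
    rw [mem_ground, Finset.mem_Icc]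
    constructor
    · rintro ⟨B, hB, hx⟩
      obtain ⟨i, _, rfl⟩ := List.mem_map.mp hB
      obtain ⟨j, hj, _, rfl⟩ := mem_blockOf.mp hx
      omega
    · rintro ⟨hx1, hx2⟩
      set j := x - 1 with hj
      have hjlen : j < w.length := by omega
      have : w[j] ∈ w.toFinset := List.mem_toFinset.mpr (List.getElem_mem hjlen)
      rw [h, Finset.mem_Icc] at this
      refine ⟨blockOf w (w[j] - 1), List.mem_map.mpr ⟨w[j] - 1, List.mem_range.mpr (by omega), rfl⟩,
        mem_blockOf.mpr ⟨j, hjlen, by rw [getD_eq hjlen]; omega, by omega⟩⟩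

lemma maxG_compOfWord {w : List ℕ} (h : WordOK w) : maxG (compOfWord w) = w.length := by
  rw [maxG, (isSetComp_compOfWord h).2.2, sup_Icc]

lemma wordOfComp_compOfWord {w : List ℕ} (h : WordOK w) : wordOfComp (compOfWord w) = w := by
  have hlen : (wordOfComp (compOfWord w)).length = w.length := by
    simp only [wordOfComp, List.length_map, List.length_range, maxG_compOfWord h]
  apply List.ext_getElem hlen
  intro j hjx hj
  simp only [wordOfComp, List.getElem_map, List.getElem_range]
  have hwj : w[j] ∈ w.toFinset := List.mem_toFinset.mpr (List.getElem_mem hj)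
  rw [h, Finset.mem_Icc] at hwj
  have hfind : (compOfWord w).findIdx (fun B => decide ((j + 1) ∈ B)) = w[j] - 1 := by
    have hl : w[j] - 1 < (compOfWord w).length := by
      simp only [compOfWord, List.length_map, List.length_range]; omega
    apply findIdx_eq_of _ _ _ hl
    · simp only [compOfWord, List.getElem_map, List.getElem_range]
      simp only [decide_eq_true_eq]
      exact mem_blockOf.mpr ⟨j, hj, by rw [getD_eq hj]; omega, rfl⟩
    · intro i hi
      simp only [compOfWord, List.getElem_map, List.getElem_range]
      simp only [decide_eq_true_eq]
      intro hmem
      obtain ⟨j', hj', he', hee⟩ := mem_blockOf.mp hmem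
      have : j' = j := by omega
      subst this
      rw [getD_eq hj'] at he'
      omega
  rw [hfind]
  omega

end SigmaAux
namespace SigmaAux

lemma maxG_eq {n : ℕ} {L : SC} (h : IsSetComp n L) : maxG L = n := by
  rw [maxG, h.2.2, sup_Icc]

lemma block_unique {n : ℕ} {L : SC} (h : IsSetComp n L) {i i' : ℕ} (hi : i < L.length)
    (hi' : i' < L.length) {x : ℕ} (hx : x ∈ L[i]) (hx' : x ∈ L[i']) : i = i' := by
  rcases lt_trichotomy i i' with hlt | he | hlt
  · exact absurd hx' (Finset.disjoint_left.mp
      (List.pairwise_iff_getElem.mp h.2.1 i i' hi hi' hlt) hx)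
  · exact he
  · exact absurd hx (Finset.disjoint_left.mp
      (List.pairwise_iff_getElem.mp h.2.1 i' i hi' hi hlt) hx')

lemma length_wordOfComp (L : SC) : (wordOfComp L).length = maxG L := by
  simp [wordOfComp]

lemma word_find {n : ℕ} {L : SC} (h : IsSetComp n L) {j : ℕ} (hj : j < n) :
    ∃ hi : (L.findIdx fun B => decide ((j + 1) ∈ B)) < L.length,
      (j + 1) ∈ L[(L.findIdx fun B => decide ((j + 1) ∈ B))] := by
  have hmem : j + 1 ∈ ground L := by
    rw [h.2.2]; exact Finset.mem_Icc.mpr ⟨by omega, by omega⟩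
  obtain ⟨B, hB, hxB⟩ := mem_ground.mp hmem
  have hlt := List.findIdx_lt_length_of_exists
    (p := fun B => decide ((j + 1) ∈ B)) (xs := L) ⟨B, hB, by simpa using hxB⟩
  refine ⟨hlt, ?_⟩
  have := List.findIdx_getElem (w := hlt)
  simpa using this

lemma word_getElem_iff {n : ℕ} {L : SC} (h : IsSetComp n L) {j i : ℕ}
    (hj : j < (wordOfComp L).length) (hi : i < L.length) :
    (wordOfComp L)[j] = i + 1 ↔ (j + 1) ∈ L[i] := by
  have hjn : j < n := by
    have := length_wordOfComp L
    rw [maxG_eq h] at this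
    omega
  have hg : (wordOfComp L)[j] = (L.findIdx fun B => decide ((j + 1) ∈ B)) + 1 := by
    simp only [wordOfComp, List.getElem_map, List.getElem_range]
  obtain ⟨hfl, hfm⟩ := word_find h hjn
  rw [hg]
  constructor
  · intro he
    have heq : L.findIdx (fun B => decide ((j + 1) ∈ B)) = i := by omega
    subst heq
    exact hfm
  · intro hmem
    have := block_unique h hfl hi hfm hmem
    omega

lemma wordOK_wordOfComp {n : ℕ} {L : SC} (h : IsSetComp n L) :
    (wordOfComp L).toFinset = Finset.Icc 1 L.length := by
  ext x
  rw [List.mem_toFinset, List.mem_iff_getElem, Finset.mem_Icc]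
  constructor
  · rintro ⟨j, hj, rfl⟩
    have hjn : j < n := by have := length_wordOfComp L; rw [maxG_eq h] at this; omega
    have hg : (wordOfComp L)[j] = (L.findIdx fun B => decide ((j + 1) ∈ B)) + 1 := by
      simp only [wordOfComp, List.getElem_map, List.getElem_range]
    obtain ⟨hfl, _⟩ := word_find h hjn
    rw [hg]
    omega
  · rintro ⟨hx1, hx2⟩
    have hi : x - 1 < L.length := by omega
    obtain ⟨y, hy⟩ := h.1 L[x-1] (List.getElem_mem hi)
    have hyg : y ∈ ground L := mem_ground.mpr ⟨L[x-1], List.getElem_mem hi, hy⟩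
    rw [h.2.2, Finset.mem_Icc] at hyg
    have hjlen : y - 1 < (wordOfComp L).length := by
      rw [length_wordOfComp, maxG_eq h]; omega
    refine ⟨y - 1, hjlen, ?_⟩
    have := (word_getElem_iff h hjlen hi).mpr (by
      have : y - 1 + 1 = y := by omega
      rw [this]; exact hy)
    omega

lemma foldr_wordOfComp {n : ℕ} {L : SC} (h : IsSetComp n L) :
    (wordOfComp L).foldr max 0 = L.length := by
  rw [foldr_max_eq_sup, wordOK_wordOfComp h, sup_Icc]

lemma wordOK_of_isSetComp {n : ℕ} {L : SC} (h : IsSetComp n L) : WordOK (wordOfComp L) := by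
  rw [WordOK, foldr_wordOfComp h]
  exact wordOK_wordOfComp h

lemma compOfWord_wordOfComp {n : ℕ} {L : SC} (h : IsSetComp n L) :
    compOfWord (wordOfComp L) = L := by
  have hlen : (compOfWord (wordOfComp L)).length = L.length := by
    simp only [compOfWord, List.length_map, List.length_range]
    exact foldr_wordOfComp h
  apply List.ext_getElem hlen
  intro i hix hi
  simp only [compOfWord, List.getElem_map, List.getElem_range]
  ext x
  rw [mem_blockOf]
  constructor
  · rintro ⟨j, hj, he, rfl⟩
    rw [getD_eq hj] at he
    exact (word_getElem_iff h hj hi).mp he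
  · intro hx
    have hxg : x ∈ ground L := mem_ground.mpr ⟨L[i], List.getElem_mem hi, hx⟩
    rw [h.2.2, Finset.mem_Icc] at hxg
    have hjlen : x - 1 < (wordOfComp L).length := by
      rw [length_wordOfComp, maxG_eq h]; omega
    refine ⟨x - 1, hjlen, ?_, by omega⟩
    rw [getD_eq hjlen]
    refine (word_getElem_iff h hjlen hi).mpr ?_
    have : x - 1 + 1 = x := by omega
    rw [this]; exact hx

lemma wordOK_of_incTree {t : LTree} (h : IsIncTree t) : WordOK t.brLevels := by
  rw [WordOK, ← levels_toFinset h.1, h.2, numLevels_eq h.1]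

end SigmaAux
/-- **Theorem (bijection).** For every `n ≥ 0`, the map `(T,λ) ↦ σ(T,λ)` is a
bijection from the set of all increasing trees with `n` branchings onto the set
of all set compositions of `[n]`. -/
theorem sigma_bijection (n : ℕ) :
    Set.BijOn sigmaOf {t : LTree | IsIncTree t ∧ t.brLevels.length = n}
      {L : SC | IsSetComp n L} := by
  classical
  refine Set.InvOn.bijOn (f' := fun L => SigmaAux.treeOfWord (SigmaAux.wordOfComp L))
    ⟨?_, ?_⟩ ?_ ?_
  · -- left inverse on trees
    rintro t ⟨hinc, hlen⟩
    have hOK := SigmaAux.wordOK_of_incTree hinc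
    show SigmaAux.treeOfWord (SigmaAux.wordOfComp (sigmaOf t)) = t
    rw [SigmaAux.sigmaOf_eq_comp, SigmaAux.wordOfComp_compOfWord hOK]
    exact SigmaAux.treeOfWord_brLevels hinc.1
  · -- right inverse on set compositions
    intro L hL
    show sigmaOf (SigmaAux.treeOfWord (SigmaAux.wordOfComp L)) = L
    rw [SigmaAux.sigmaOf_eq_comp, SigmaAux.brLevels_treeOfWord]
    exact SigmaAux.compOfWord_wordOfComp hL
  · -- maps to
    rintro t ⟨hinc, hlen⟩
    have hOK := SigmaAux.wordOK_of_incTree hinc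
    show IsSetComp n (sigmaOf t)
    rw [SigmaAux.sigmaOf_eq_comp, ← hlen]
    exact SigmaAux.isSetComp_compOfWord hOK
  · -- inverse maps to
    intro L hL
    have hL' : IsSetComp n L := hL
    have hOK := SigmaAux.wordOK_of_isSetComp hL'
    have hpos : ∀ x ∈ SigmaAux.wordOfComp L, 0 < x := by
      intro x hx
      have : x ∈ (SigmaAux.wordOfComp L).toFinset := List.mem_toFinset.mpr hx
      rw [hOK, Finset.mem_Icc] at this
      omega
    have hinc := SigmaAux.incrFrom_treeOfWord (SigmaAux.wordOfComp L) 0 hpos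
    have hbr := SigmaAux.brLevels_treeOfWord (SigmaAux.wordOfComp L)
    refine ⟨⟨hinc, ?_⟩, ?_⟩
    · rw [SigmaAux.levels_toFinset hinc, SigmaAux.numLevels_eq hinc, hbr]
      exact hOK
    · rw [hbr, SigmaAux.length_wordOfComp, SigmaAux.maxG_eq hL']
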